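/- Let λ > 0, d > 0, f(t) = λ θ(t−d) e^{−λ(t−d)}, and let R(t) = Σ_{k=1}^{∞} f^{⋆k}(t) (a locally finite sum, since f^{⋆k}(t) = 0 for t < kd). Then for all t ≥ 0, ∫_{t-d}^{t} R(s+d) ds + λ^{−1} R(t+d) = 1. -/

import Mathlib

/-- Convolution of two real functions: `(u ⋆ v)(t) = ∫_ℝ u(s) v(t-s) ds`. -/
noncomputable def conv (u v : ℝ → ℝ) : ℝ → ℝ := fun t => ∫ s : ℝ, u s * v (t - s)

/-- Convolution powers: `convPow f n = f^{⋆(n+1)}`, i.e. `convPow f 0 = f`. -/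
noncomputable def convPow (f : ℝ → ℝ) : ℕ → ℝ → ℝ
  | 0 => f
  | n + 1 => conv (convPow f n) f

section PPDaux

open Nat MeasureTheory Finset

noncomputable def EmF (lam : ℝ) (k : ℕ) (y : ℝ) : ℝ :=
  Real.exp (-lam * y) * ∑ j ∈ Finset.range k, (lam * y)^j / j !

lemma EmF_hasDerivAt (lam : ℝ) (n : ℕ) (y : ℝ) :
    HasDerivAt (EmF lam (n+1)) (-(lam * ((lam*y)^n / n !) * Real.exp (-lam*y))) y := by
  induction n with
  | zero =>
    have h : EmF lam 1 = fun y => Real.exp (-lam * y) := by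
      funext z; simp [EmF]
    rw [h]
    have := ((hasDerivAt_id y).const_mul (-lam)).exp
    simp only [id] at this
    convert this using 1
    simp [mul_comm]
  | succ n ih =>
    have h : EmF lam (n+2) = fun z => EmF lam (n+1) z
        + Real.exp (-lam * z) * ((lam*z)^(n+1) / (n+1)!) := by
      funext z; simp [EmF, Finset.sum_range_succ, mul_add]
    rw [h]
    have h1 : HasDerivAt (fun z : ℝ => Real.exp (-lam * z)) (Real.exp (-lam*y) * (-lam)) y := by
      have := ((hasDerivAt_id y).const_mul (-lam)).exp
      simpa using this
    have h2 : HasDerivAt (fun z : ℝ => (lam*z)^(n+1)) ((↑(n+1)) * (lam*y)^n * lam) y := by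
      have := (((hasDerivAt_id y).const_mul lam).fun_pow (n+1))
      simpa using this
    have h3 := (h1.mul (h2.div_const ((n+1)! : ℝ)))
    have h4 := ih.add h3
    convert h4 using 1 <;> try rfl
    have hfac : ((n+1)! : ℝ) = (n+1) * (n !) := by
      push_cast [Nat.factorial_succ]; ring
    have hne : ((n:ℝ)+1) ≠ 0 := by positivity
    have hfne : ((n !:ℝ)) ≠ 0 := Nat.cast_ne_zero.mpr (Nat.factorial_ne_zero n)
    rw [hfac]
    field_simp
    push_cast; ring

lemma integral_phi (lam c : ℝ) (n : ℕ) (a b : ℝ) :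
    ∫ s in a..b, lam^(n+1) * (s-c)^n * Real.exp (-lam*(s-c)) / n !
      = EmF lam (n+1) (a-c) - EmF lam (n+1) (b-c) := by
  have hderiv : ∀ x ∈ Set.uIcc a b, HasDerivAt (fun x => -(EmF lam (n+1) (x - c)))
      (lam^(n+1) * (x-c)^n * Real.exp (-lam*(x-c)) / n !) x := by
    intro x _
    have h0 := (EmF_hasDerivAt lam n (x - c)).comp x ((hasDerivAt_id x).sub_const c)
    have h1 := h0.neg
    convert h1 using 1 <;> try rfl
    simp [mul_pow]
    ring
  have hcont : IntervalIntegrable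
      (fun s => lam^(n+1) * (s-c)^n * Real.exp (-lam*(s-c)) / n !) volume a b := by
    apply Continuous.intervalIntegrable
    fun_prop
  have := intervalIntegral.integral_eq_sub_of_hasDerivAt hderiv hcont
  rw [this]; ring

/-- closed form for the convolution powers -/
lemma convPow_eq (lam d : ℝ) (hlam : 0 < lam) (hd : 0 < d) (f : ℝ → ℝ)
    (hf : ∀ t : ℝ, f t = if d ≤ t then lam * Real.exp (-lam * (t - d)) else 0) :
    ∀ (n : ℕ) (t : ℝ), convPow f n t =
      if ((n:ℝ)+1)*d ≤ t then
        lam^(n+1) * (t-((n:ℝ)+1)*d)^n * Real.exp (-lam*(t-((n:ℝ)+1)*d)) / n !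
      else 0 := by
  intro n
  induction n with
  | zero =>
    intro t
    rw [show convPow f 0 = f from rfl, hf t]
    norm_num
  | succ n ih =>
    intro t
    set c : ℝ := ((n:ℝ)+1)*d with hc
    have hkey : ∀ s : ℝ, convPow f n s * f (t - s) =
        Set.indicator (Set.Icc c (t-d))
          (fun s => (lam^(n+2) * Real.exp (-lam*(t-((n:ℝ)+2)*d)) / n !) * (s-c)^n) s := by
      intro s
      rw [ih s, hf (t - s), Set.indicator_apply]
      simp only [Set.mem_Icc]
      by_cases h1 : c ≤ s
      · by_cases h2 : d ≤ t - s
        · rw [if_pos h1, if_pos h2, if_pos ⟨h1, by linarith⟩]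
          have hexp : Real.exp (-lam*(s-c)) * Real.exp (-lam*(t-s-d))
              = Real.exp (-lam*(t-((n:ℝ)+2)*d)) := by
            rw [← Real.exp_add]; congr 1; rw [hc]; ring
          rw [← hexp]; ring
        · rw [if_pos h1, if_neg h2, mul_zero, if_neg (by rintro ⟨h3, h4⟩; exact h2 (by linarith))]
      · rw [if_neg h1, zero_mul, if_neg (by rintro ⟨h3, h4⟩; exact h1 h3)]
    show conv (convPow f n) f t = _
    unfold conv
    simp only [hkey]
    rw [MeasureTheory.integral_indicator measurableSet_Icc]
    by_cases ht : ((n:ℝ)+2)*d ≤ t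
    · have hcb : c ≤ t - d := by rw [hc]; linarith
      rw [if_pos (by push_cast; linarith)]
      rw [MeasureTheory.integral_Icc_eq_integral_Ioc, ← intervalIntegral.integral_of_le hcb]
      rw [intervalIntegral.integral_const_mul]
      have : (∫ s in c..(t-d), (s - c)^n) = (t - d - c)^(n+1) / (n+1) := by
        rw [intervalIntegral.integral_comp_sub_right (fun x => x^n) c]
        rw [sub_self, integral_pow]
        norm_num
      rw [this]
      have h1 : t - d - c = t - ((n:ℝ)+2)*d := by rw [hc]; ring
      rw [h1]
      have hfne : ((n !:ℝ)) ≠ 0 := Nat.cast_ne_zero.mpr (Nat.factorial_ne_zero n)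
      push_cast [Nat.factorial_succ]
      field_simp
      ring
    · rw [if_neg (by push_cast at ht ⊢; intro h; exact ht (by linarith))]
      have : Set.Icc c (t-d) = ∅ := Set.Icc_eq_empty (by rw [hc]; intro h; exact ht (by linarith))
      rw [this]
      simp

lemma EmF_step (lam : ℝ) (hlam : lam ≠ 0) (n : ℕ) (y : ℝ) :
    lam⁻¹ * (lam^(n+1) * y^n * Real.exp (-lam*y) / n !) = EmF lam (n+1) y - EmF lam n y := by
  have hfne : ((n !:ℝ)) ≠ 0 := Nat.cast_ne_zero.mpr (Nat.factorial_ne_zero n)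
  simp only [EmF, Finset.sum_range_succ, mul_add, mul_pow]
  field_simp
  ring

lemma EmF_zero_right (lam : ℝ) (k : ℕ) : EmF lam (k+1) 0 = 1 := by
  simp [EmF, Finset.sum_range_succ', zero_pow, Nat.succ_ne_zero]


/-- with `f(t) = lam·θ(t-d)·e^{-lam(t-d)}` and the renewal density
`R(t) = Σ_{k≥1} f^{⋆k}(t)`, for all `t ≥ 0` one has
`∫_{t-d}^t R(s+d) ds + lam⁻¹ R(t+d) = 1`. -/
theorem stmt_2 (lam d : ℝ) (hlam : 0 < lam) (hd : 0 < d)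
    (f R : ℝ → ℝ)
    (hf : ∀ t : ℝ, f t = if d ≤ t then lam * Real.exp (-lam * (t - d)) else 0)
    (hR : ∀ t : ℝ, R t = ∑' n : ℕ, convPow f n t) :
    ∀ t : ℝ, 0 ≤ t → (∫ s in (t - d)..t, R (s + d)) + lam⁻¹ * R (t + d) = 1 := by
  intro t ht
  have hg := convPow_eq lam d hlam hd f hf
  set gp : ℕ → ℝ → ℝ := fun n u =>
    if ((n:ℝ)+1)*d ≤ u then
      lam^(n+1) * (u-((n:ℝ)+1)*d)^n * Real.exp (-lam*(u-((n:ℝ)+1)*d)) / n !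
    else 0 with hgp
  set m : ℕ := ⌊t/d⌋₊ with hm
  have hmd : (m:ℝ)*d ≤ t := by
    have h1 : (m:ℝ) ≤ t/d := Nat.floor_le (by positivity)
    have h2 : (m:ℝ)*d ≤ (t/d)*d := by nlinarith
    rw [div_mul_cancel₀ t (ne_of_gt hd)] at h2
    exact h2
  have hmd2 : t < ((m:ℝ)+1)*d := by
    have h1 : t/d < (m:ℝ)+1 := Nat.lt_floor_add_one (t/d)
    have h2 : (t/d)*d < ((m:ℝ)+1)*d := by nlinarith
    rw [div_mul_cancel₀ t (ne_of_gt hd)] at h2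
    exact h2
  -- finite sum representation of R
  have hRsum : ∀ u : ℝ, u ≤ t + d → R u = ∑ n ∈ Finset.range (m+1), gp n u := by
    intro u hu
    rw [hR u, tsum_eq_sum (s := Finset.range (m+1)) ?_]
    · exact Finset.sum_congr rfl (fun n _ => by rw [hg n u])
    · intro n hn
      rw [hg n u]
      apply if_neg
      have hn' : (m+1 : ℕ) ≤ n := by simpa using hn
      have hn'' : ((m:ℝ)+1) ≤ (n:ℝ) := by exact_mod_cast hn'
      intro hcon
      nlinarith
  -- integrability
  have hInt : ∀ (n : ℕ) (a b : ℝ), IntervalIntegrable (gp n) volume a b := by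
    intro n a b
    have hind : gp n = Set.indicator (Set.Ici (((n:ℝ)+1)*d))
        (fun u => lam^(n+1) * (u-((n:ℝ)+1)*d)^n * Real.exp (-lam*(u-((n:ℝ)+1)*d)) / n !) := by
      funext u
      rw [hgp, Set.indicator_apply]
      simp [Set.mem_Ici]
    have hc : Continuous
        (fun u : ℝ => lam^(n+1) * (u-((n:ℝ)+1)*d)^n * Real.exp (-lam*(u-((n:ℝ)+1)*d)) / n !) := by
      fun_prop
    rw [hind]
    exact ⟨((hc.intervalIntegrable a b).1).indicator measurableSet_Ici,
      ((hc.intervalIntegrable a b).2).indicator measurableSet_Ici⟩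
  -- rewrite the integral
  have hIcongr : (∫ s in (t-d)..t, R (s+d))
      = ∫ s in (t-d)..t, ∑ n ∈ Finset.range (m+1), gp n (s+d) := by
    apply intervalIntegral.integral_congr
    intro s hs
    rw [Set.uIcc_of_le (by linarith)] at hs
    exact hRsum (s+d) (by linarith [hs.2])
  have hshift : (∫ s in (t-d)..t, ∑ n ∈ Finset.range (m+1), gp n (s+d))
      = ∫ u in t..(t+d), ∑ n ∈ Finset.range (m+1), gp n u := by
    have h := intervalIntegral.integral_comp_add_right
      (a := t-d) (b := t) (fun u => ∑ n ∈ Finset.range (m+1), gp n u) d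
    rw [h, sub_add_cancel]
  rw [hIcongr, hshift, hRsum (t+d) le_rfl,
    intervalIntegral.integral_finset_sum (fun n _ => hInt n t (t+d)),
    Finset.mul_sum, ← Finset.sum_add_distrib]
  -- per-term values
  set D : ℕ → ℝ := fun k => EmF lam k (t - (k:ℝ)*d) with hD
  have hB : ∀ n : ℕ, n ≤ m → lam⁻¹ * gp n (t+d)
      = EmF lam (n+1) (t - (n:ℝ)*d) - EmF lam n (t - (n:ℝ)*d) := by
    intro n hn
    have hnm : (n:ℝ) ≤ (m:ℝ) := by exact_mod_cast hn
    rw [hgp]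
    simp only
    rw [if_pos (by nlinarith)]
    have harg : t + d - ((n:ℝ)+1)*d = t - (n:ℝ)*d := by ring
    rw [harg, EmF_step lam (ne_of_gt hlam)]
  have hA1 : ∀ n : ℕ, n + 1 ≤ m → (∫ u in t..(t+d), gp n u)
      = EmF lam (n+1) (t-((n:ℝ)+1)*d) - EmF lam (n+1) (t-(n:ℝ)*d) := by
    intro n hn
    have hnm : ((n:ℝ)+1) ≤ (m:ℝ) := by exact_mod_cast hn
    have hc : ((n:ℝ)+1)*d ≤ t := by nlinarith
    have hcongr : ∀ u ∈ Set.uIcc t (t+d), gp n u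
        = lam^(n+1) * (u-((n:ℝ)+1)*d)^n * Real.exp (-lam*(u-((n:ℝ)+1)*d)) / n ! := by
      intro u hu
      rw [Set.uIcc_of_le (by linarith)] at hu
      rw [hgp]
      exact if_pos (by linarith [hu.1])
    rw [intervalIntegral.integral_congr hcongr, integral_phi]
    have h1 : t + d - ((n:ℝ)+1)*d = t - (n:ℝ)*d := by ring
    rw [h1]
  have hAm : (∫ u in t..(t+d), gp m u) = 1 - EmF lam (m+1) (t-(m:ℝ)*d) := by
    set c : ℝ := ((m:ℝ)+1)*d with hcdef
    have hcm : t < c := hmd2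
    have hcm2 : c ≤ t + d := by rw [hcdef]; linarith
    rw [← intervalIntegral.integral_add_adjacent_intervals (hInt m t c) (hInt m c (t+d))]
    have hz : (∫ u in t..c, gp m u) = 0 := by
      rw [intervalIntegral.integral_of_le (le_of_lt hcm), hgp]
      simp only
      have hind : (fun u => if c ≤ u then
          lam^(m+1) * (u-c)^m * Real.exp (-lam*(u-c)) / m ! else 0)
          = Set.indicator (Set.Ici c)
            (fun u => lam^(m+1) * (u-c)^m * Real.exp (-lam*(u-c)) / m !) := by
        funext u; rw [Set.indicator_apply]; simp [Set.mem_Ici]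
      rw [hind, MeasureTheory.setIntegral_indicator measurableSet_Ici]
      have hset : Set.Ioc t c ∩ Set.Ici c = {c} := by
        ext x
        simp only [Set.mem_inter_iff, Set.mem_Ioc, Set.mem_Ici, Set.mem_singleton_iff]
        constructor
        · rintro ⟨⟨h1, h2⟩, h3⟩; linarith
        · rintro rfl; exact ⟨⟨hcm, le_rfl⟩, le_rfl⟩
      rw [hset]
      have hz0 : (volume : Measure ℝ).restrict {c} = 0 := by
        rw [Measure.restrict_eq_zero]; exact measure_singleton c
      rw [hz0]
      exact integral_zero_measure _
    have h2 : (∫ u in c..(t+d), gp m u)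
        = EmF lam (m+1) 0 - EmF lam (m+1) (t - (m:ℝ)*d) := by
      have hcongr : ∀ u ∈ Set.uIcc c (t+d), gp m u
          = lam^(m+1) * (u-((m:ℝ)+1)*d)^m * Real.exp (-lam*(u-((m:ℝ)+1)*d)) / m ! := by
        intro u hu
        rw [Set.uIcc_of_le hcm2] at hu
        rw [hgp]
        exact if_pos hu.1
      rw [intervalIntegral.integral_congr hcongr, integral_phi]
      have e1 : c - ((m:ℝ)+1)*d = 0 := by rw [hcdef]; ring
      have e2 : t + d - ((m:ℝ)+1)*d = t - (m:ℝ)*d := by ring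
      rw [e1, e2]
    rw [hz, h2, EmF_zero_right]
    ring
  -- assemble
  rw [Finset.sum_range_succ]
  have hterm : ∀ n ∈ Finset.range m,
      (∫ u in t..(t+d), gp n u) + lam⁻¹ * gp n (t+d) = D (n+1) - D n := by
    intro n hn
    have hn' : n + 1 ≤ m := Finset.mem_range.mp hn
    rw [hA1 n hn', hB n (le_of_lt (Finset.mem_range.mp hn))]
    rw [hD]
    simp only
    push_cast
    ring
  rw [Finset.sum_congr rfl hterm, Finset.sum_range_sub D,
    hAm, hB m le_rfl]
  have hD0 : D 0 = 0 := by simp [hD, EmF]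
  have hDm : D m = EmF lam m (t - (m:ℝ)*d) := rfl
  rw [hD0, hDm]
  ring

end PPDaux
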